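/- A binary form f ∈ K[x,y]_d has K-rank at most r if and only if the degree-r part (f^⊥)_r of its apolar ideal contains a form of degree r with r distinct roots, all defined over K. -/

import Mathlib

open MvPolynomial

noncomputable section

/-- The Zariski closure of a subset of the affine space `σ → K`. -/
def zClosure {K : Type} [Field K] {σ : Type} [Fintype σ] [DecidableEq σ]
    (S : Set (σ → K)) : Set (σ → K) :=
  {x | ∀ p : MvPolynomial σ K, (∀ y ∈ S, eval y p = 0) → eval x p = 0}

/-- A subset of affine space is Zariski closed if it equals its Zariski closure. -/
def zClosed {K : Type} [Field K] {σ : Type} [Fintype σ] [DecidableEq σ]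
    (S : Set (σ → K)) : Prop :=
  zClosure S = S

/-- Irreducibility of a subset of affine space in the Zariski topology,
tested against the basic open sets. -/
def zIrreducible {K : Type} [Field K] {σ : Type} [Fintype σ] [DecidableEq σ]
    (S : Set (σ → K)) : Prop :=
  S.Nonempty ∧ ∀ p q : MvPolynomial σ K,
    (∀ x ∈ S, eval x p = 0 ∨ eval x q = 0) →
    (∀ x ∈ S, eval x p = 0) ∨ (∀ x ∈ S, eval x q = 0)

/-- There is a strictly increasing chain of `m+1` irreducible Zariski-closed
subsets contained in `S`. -/
def zChain {K : Type} [Field K] {σ : Type} [Fintype σ] [DecidableEq σ]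
    (S : Set (σ → K)) (m : ℕ) : Prop :=
  ∃ c : Fin (m+1) → Set (σ → K),
    (∀ i, zIrreducible (c i) ∧ zClosed (c i) ∧ c i ⊆ S) ∧
    ∀ i j : Fin (m+1), i < j → c i ⊂ c j

/-- `S` has (Krull) dimension `m` in the Zariski topology. -/
def zDimEq {K : Type} [Field K] {σ : Type} [Fintype σ] [DecidableEq σ]
    (S : Set (σ → K)) (m : ℕ) : Prop :=
  zChain S m ∧ ¬ zChain S (m+1)

/-- The (embedded, affine) Zariski tangent space to `S` at `a`: the common kernel of the
differentials at `a` of all polynomials vanishing on `S`. -/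
def zTangentAt {K : Type} [Field K] {σ : Type} [Fintype σ] [DecidableEq σ]
    (S : Set (σ → K)) (a : σ → K) : Set (σ → K) :=
  {v | ∀ p : MvPolynomial σ K, (∀ y ∈ S, eval y p = 0) →
        ∑ i : σ, eval a (pderiv i p) * v i = 0}

/-- Dimension of the Zariski tangent space at a point. -/
def zTangentDim {K : Type} [Field K] {σ : Type} [Fintype σ] [DecidableEq σ]
    (S : Set (σ → K)) (a : σ → K) : ℕ :=
  Module.finrank K (Submodule.span K (zTangentAt S a))

/-- The binary form of degree `r` with coefficient vector `a`. -/
def binForm {K : Type} [CommSemiring K] (r : ℕ) (a : Fin (r+1) → K) :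
    MvPolynomial (Fin 2) K :=
  ∑ i : Fin (r+1), C (a i) * X 0 ^ (r - (i : ℕ)) * X 1 ^ (i : ℕ)

/-- The linear binary form `u·x + v·y`. -/
def linForm {K : Type} [CommSemiring K] (u v : K) : MvPolynomial (Fin 2) K :=
  C u * X 0 + C v * X 1

/-- The affine cone over the coincident root locus `Δ_λ ⊆ ℙ^r`, in coefficient coordinates:
scalar multiples of forms `∏ ℓ_i ^ λ_i`. -/
def crlCone (r n : ℕ) (lam : Fin n → ℕ) : Set (Fin (r+1) → ℂ) :=
  {a | ∃ (t : ℂ) (u v : Fin n → ℂ),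
    binForm r a = C t * ∏ i, (linForm (u i) (v i)) ^ lam i}

/-- `lam` is a partition of `r` of length `n` (all parts positive). -/
def isPartitionOf (r n : ℕ) (lam : Fin n → ℕ) : Prop :=
  (∀ i, 1 ≤ lam i) ∧ ∑ i, lam i = r

/-- The multiplicity `m_j` of the part `j` in the partition `lam`. -/
def multOf {n : ℕ} (lam : Fin n → ℕ) (jj : ℕ) : ℕ :=
  (Finset.univ.filter fun i => lam i = jj).card

/-- The differential operator of degree `s` with coefficient vector `b`, i.e.
`∑ b_i ∂x^(s-i) ∂y^i`, applied to `f`. -/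
def diffOp {K : Type} [CommSemiring K] (s : ℕ) (b : Fin (s+1) → K)
    (f : MvPolynomial (Fin 2) K) : MvPolynomial (Fin 2) K :=
  ∑ i : Fin (s+1), b i •
    ((fun g => pderiv (0 : Fin 2) g)^[s - (i : ℕ)]
      (((fun g => pderiv (1 : Fin 2) g)^[(i : ℕ)]) f))

/-- The apolarity pairing between a degree-`d` operator (coefficients `h`) and a
degree-`d` form (coefficients `a`). -/
def apolarPair (d : ℕ) (h a : Fin (d+1) → ℂ) : ℂ :=
  eval (fun _ => (0 : ℂ)) (diffOp d h (binForm d a))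

/-- The cone over the dual variety of the cone `S ⊆ ℂ^(m+1)` (with `k` the dimension of the
cone `S`, used to select smooth points): closure of the set of hyperplanes, written in dual
coordinates via the apolarity pairing, containing an embedded tangent space at a smooth point. -/
def dualConeOf (m : ℕ) (S : Set (Fin (m+1) → ℂ)) (k : ℕ) : Set (Fin (m+1) → ℂ) :=
  zClosure {h | h ≠ 0 ∧ ∃ a ∈ S, a ≠ 0 ∧ zTangentDim S a = k ∧
      ∀ v ∈ zTangentAt S a, apolarPair m h v = 0}

/-- The row span of a matrix, as a subspace of `ℂ^m`. -/
def rowSpan {k m : ℕ} (M : Matrix (Fin k) (Fin m) ℂ) : Submodule ℂ (Fin m → ℂ) :=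
  Submodule.span ℂ (Set.range fun i => M i)

/-- The (redundant) Plücker coordinate vector of the row span of `M`: all maximal minors. -/
def plucker {k m : ℕ} (M : Matrix (Fin k) (Fin m) ℂ) : (Fin k → Fin m) → ℂ :=
  fun s => (M.submatrix id s).det

/-- The degree-`s` component of the apolar ideal of the degree-`d` form with
coefficients `a`, as a subset of the coefficient space of operators. -/
def apolarSet (d s : ℕ) (a : Fin (d+1) → ℂ) : Set (Fin (s+1) → ℂ) :=
  {b | diffOp s b (binForm d a) = 0}

/-- The (pre-closure) cone, in Plücker coordinates, over the `j`-th higher associated variety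
`CH_j(S)`: spans of `k`-row matrices whose row space contains a smooth point `x` of the cone
`S` (`dimS` = dimension of the cone `S`) and meets the tangent space at `x` in projective
dimension at least `j`. -/
def smoothCHCone (m : ℕ) (S : Set (Fin (m+1) → ℂ)) (dimS k j : ℕ) :
    Set ((Fin k → Fin (m+1)) → ℂ) :=
  {u | ∃ M : Matrix (Fin k) (Fin (m+1)) ℂ, u = plucker M ∧
    Module.finrank ℂ (rowSpan M) = k ∧
    ∃ x, x ≠ 0 ∧ x ∈ S ∧ zTangentDim S x = dimS ∧ x ∈ rowSpan M ∧
      j + 1 ≤ Module.finrank ℂ ↥(rowSpan M ⊓ Submodule.span ℂ (zTangentAt S x))}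

/-- The (pre-closure) cone, in Plücker coordinates, over `Ξ_0(S)`: spans of `k`-row matrices
whose row space meets the cone `S` nontrivially. -/
def meetCone (m : ℕ) (S : Set (Fin (m+1) → ℂ)) (k : ℕ) :
    Set ((Fin k → Fin (m+1)) → ℂ) :=
  {u | ∃ M : Matrix (Fin k) (Fin (m+1)) ℂ, u = plucker M ∧
    Module.finrank ℂ (rowSpan M) = k ∧ ∃ x, x ≠ 0 ∧ x ∈ S ∧ x ∈ rowSpan M}

/-- The preimage under the apolar map `Ψ_{d,s}` of a subset `T` of the Grassmannian
(in Plücker coordinates) of `(k-1)`-projective-dimensional subspaces of `ℙ(D_s)`. -/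
def apolarPull (d s k : ℕ) (T : Set ((Fin k → Fin (s+1)) → ℂ)) : Set (Fin (d+1) → ℂ) :=
  {a | ∃ M : Matrix (Fin k) (Fin (s+1)) ℂ,
    rowSpan M = Submodule.span ℂ (apolarSet d s a) ∧
    Module.finrank ℂ (rowSpan M) = k ∧ plucker M ∈ T}

/-- The Waring rank over `K` of a binary form: the least `r` such that `f` is a sum of `r`
scalar multiples of `d`-th powers of linear forms. -/
def waringRank {K : Type} [Field K] (d : ℕ) (f : MvPolynomial (Fin 2) K) : ℕ :=
  sInf {r | ∃ (α u v : Fin r → K), f = ∑ i, α i • (linForm (u i) (v i)) ^ d}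

/-- The set of coefficient vectors of real binary forms of degree `d` of real rank `r`. -/
def realRankSet (d r : ℕ) : Set (Fin (d+1) → ℝ) :=
  {a | waringRank d (binForm d a) = r}

/-- `R_{d,r}`: the interior, in the Euclidean topology, of the set of real binary forms of
degree `d` and real rank `r`. -/
def Rdr (d r : ℕ) : Set (Fin (d+1) → ℝ) := interior (realRankSet d r)

/-- The topological boundary of `R_{d,r}`: the closure of `R_{d,r}` minus the interior of
the closure. -/
def topBoundary (d r : ℕ) : Set (Fin (d+1) → ℝ) :=
  closure (Rdr d r) \ interior (closure (Rdr d r))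

/-- The algebraic boundary `∂_alg(R_{d,r})`: the Zariski closure over `ℂ` of the topological
boundary of `R_{d,r}`. -/
def algBoundary (d r : ℕ) : Set (Fin (d+1) → ℂ) :=
  zClosure ((fun a i => ((a i : ℝ) : ℂ)) '' topBoundary d r)

set_option linter.unusedSectionVars false
set_option linter.unusedTactic false

section AuxApolar

variable {K : Type} [Field K] [CharZero K]

lemma deg2 (m : Fin 2 →₀ ℕ) : Finsupp.degree m = m 0 + m 1 := by
  rw [Finsupp.degree_apply, Finset.sum_subset (Finset.subset_univ _)
    (fun i _ hi => Finsupp.notMem_support_iff.mp hi), Fin.sum_univ_two]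

lemma pd_comm (i j : Fin 2) (f : MvPolynomial (Fin 2) K) :
    pderiv i (pderiv j f) = pderiv j (pderiv i f) := by
  induction f using MvPolynomial.induction_on' with
  | add p q hp hq => simp only [map_add, hp, hq]
  | monomial m c =>
    by_cases hij : i = j
    · subst hij; rfl
    · rw [pderiv_monomial, pderiv_monomial, pderiv_monomial, pderiv_monomial]
      simp only [Finsupp.tsub_apply, Finsupp.single_eq_of_ne hij,
        Finsupp.single_eq_of_ne (Ne.symm hij), tsub_zero, tsub_tsub]
      rw [add_comm (Finsupp.single j 1)]
      congr 1
      push_cast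
      ring

lemma X_mul_pderiv_monomial (i : Fin 2) (m : Fin 2 →₀ ℕ) (c : K) :
    X i * pderiv i (monomial m c) = monomial m (c * (m i : K)) := by
  rw [pderiv_monomial]
  rcases Nat.eq_zero_or_pos (m i) with h | h
  · simp [h]
  · rw [X, monomial_mul, one_mul, add_tsub_cancel_of_le (Finsupp.single_le_iff.mpr h)]

lemma support_deg {f : MvPolynomial (Fin 2) K} {n : ℕ} (hf : f.IsHomogeneous n)
    {m : Fin 2 →₀ ℕ} (hm : m ∈ f.support) : m 0 + m 1 = n := by
  have := hf (mem_support_iff.mp hm)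
  change Finsupp.weight (fun _ => 1) m = n at this
  rwa [← Finsupp.degree_eq_weight_one, deg2] at this

lemma euler (n : ℕ) (f : MvPolynomial (Fin 2) K) (hf : f.IsHomogeneous n) :
    X 0 * pderiv (0 : Fin 2) f + X 1 * pderiv (1 : Fin 2) f = (n : K) • f := by
  conv_lhs => rw [f.as_sum]
  conv_rhs => rw [f.as_sum]
  rw [map_sum (pderiv (0 : Fin 2)), map_sum (pderiv (1 : Fin 2)), Finset.mul_sum,
    Finset.mul_sum, ← Finset.sum_add_distrib, Finset.smul_sum]
  refine Finset.sum_congr rfl fun m hm => ?_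
  rw [_root_.X_mul_pderiv_monomial, _root_.X_mul_pderiv_monomial, smul_monomial, ← map_add]
  congr 1
  have := support_deg hf hm
  rw [smul_eq_mul, ← mul_add, ← Nat.cast_add, this]
  ring

lemma pderiv_homog (i : Fin 2) (n : ℕ) (f : MvPolynomial (Fin 2) K)
    (hf : f.IsHomogeneous n) : (pderiv i f).IsHomogeneous (n - 1) := by
  have hrw : pderiv i f =
      ∑ m ∈ f.support, monomial (m - Finsupp.single i 1) (coeff m f * (m i : K)) := by
    conv_lhs => rw [f.as_sum]
    rw [map_sum (pderiv i)]
    exact Finset.sum_congr rfl fun m _ => pderiv_monomial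
  rw [hrw]
  apply IsHomogeneous.sum
  intro m hm
  rcases Nat.eq_zero_or_pos (m i) with h | h
  · rw [h]; push_cast; rw [mul_zero, monomial_zero]; exact isHomogeneous_zero _ _ _
  · apply isHomogeneous_monomial
    have hd := support_deg hf hm
    rw [deg2, Finsupp.tsub_apply, Finsupp.tsub_apply]
    have hd' := h
    fin_cases i <;>
      simp only [Fin.zero_eta, Fin.mk_one, Fin.isValue, Finsupp.single_eq_same,
        Finsupp.single_eq_of_ne (by decide : (1:Fin 2) ≠ 0),
        Finsupp.single_eq_of_ne (by decide : (0:Fin 2) ≠ 1), tsub_zero] at hd' ⊢ <;>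
      omega


lemma step_pow (A B u v : K) (n : ℕ) :
    A • pderiv (1 : Fin 2) ((linForm u v) ^ n) - B • pderiv (0 : Fin 2) ((linForm u v) ^ n)
      = ((n : K) * (A * v - B * u)) • (linForm u v) ^ (n - 1) := by
  have h0 : pderiv (0 : Fin 2) (linForm u v) = C u := by simp [linForm, pderiv_X]
  have h1 : pderiv (1 : Fin 2) (linForm u v) = C v := by simp [linForm, pderiv_X]
  rw [Derivation.leibniz_pow, Derivation.leibniz_pow, h0, h1]
  simp only [smul_eq_mul, nsmul_eq_mul, smul_eq_C_mul, map_mul, map_sub, map_natCast]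
  ring

lemma lf_ne_zero {u v : K} (h : u ≠ 0 ∨ v ≠ 0) : linForm u v ≠ 0 := by
  intro hz
  rcases h with h | h
  · have := congrArg (eval (fun i : Fin 2 => if i = 0 then (1:K) else 0)) hz
    simp [linForm] at this
    exact h this
  · have := congrArg (eval (fun i : Fin 2 => if i = 1 then (1:K) else 0)) hz
    simp [linForm] at this
    exact h this

lemma lf_homog (u v : K) : (linForm u v).IsHomogeneous 1 := by
  have h1 : (C u * X 0 : MvPolynomial (Fin 2) K).IsHomogeneous 1 := by
    simpa using (isHomogeneous_C (Fin 2) u).mul (isHomogeneous_X K 0)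
  have h2 : (C v * X 1 : MvPolynomial (Fin 2) K).IsHomogeneous 1 := by
    simpa using (isHomogeneous_C (Fin 2) v).mul (isHomogeneous_X K 1)
  exact h1.add h2

lemma smul_pow_homog (c u v : K) (n : ℕ) : (c • (linForm u v) ^ n).IsHomogeneous n := by
  rw [smul_eq_C_mul]
  simpa using (isHomogeneous_C (Fin 2) c).mul ((lf_homog u v).pow n)

section folds
variable {ι : Type} (A B : ι → K)

lemma fold_zero (l : List ι) :
    l.foldl (fun g i => A i • pderiv (1 : Fin 2) g - B i • pderiv (0 : Fin 2) g) (0 : MvPolynomial (Fin 2) K) = 0 := by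
  induction l with
  | nil => rfl
  | cons j l ih => simpa using ih

lemma fold_add (l : List ι) (g h : MvPolynomial (Fin 2) K) :
    l.foldl (fun g i => A i • pderiv (1 : Fin 2) g - B i • pderiv (0 : Fin 2) g) (g + h) =
    l.foldl (fun g i => A i • pderiv (1 : Fin 2) g - B i • pderiv (0 : Fin 2) g) g +
    l.foldl (fun g i => A i • pderiv (1 : Fin 2) g - B i • pderiv (0 : Fin 2) g) h := by
  induction l generalizing g h with
  | nil => rfl
  | cons j l ih =>
    simp only [List.foldl_cons, map_add, smul_add]
    rw [← ih]
    congr 1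
    abel

lemma fold_sum {κ : Type} (t : Finset κ) (g : κ → MvPolynomial (Fin 2) K) (l : List ι) :
    l.foldl (fun g i => A i • pderiv (1 : Fin 2) g - B i • pderiv (0 : Fin 2) g) (∑ k ∈ t, g k) =
    ∑ k ∈ t, l.foldl (fun g i => A i • pderiv (1 : Fin 2) g - B i • pderiv (0 : Fin 2) g) (g k) := by
  classical
  induction t using Finset.induction_on with
  | empty => simpa using fold_zero A B l
  | insert _ _ hk ih => rw [Finset.sum_insert hk, Finset.sum_insert hk, fold_add, ih]

lemma step_smul (A B c : K) (g : MvPolynomial (Fin 2) K) :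
    A • pderiv (1 : Fin 2) (c • g) - B • pderiv (0 : Fin 2) (c • g)
      = c • (A • pderiv (1 : Fin 2) g - B • pderiv (0 : Fin 2) g) := by
  rw [Derivation.map_smul, Derivation.map_smul, smul_sub, smul_comm A c, smul_comm B c]

lemma fold_kill (u v c : K) (n : ℕ) (l : List ι) (hk : ∃ j ∈ l, A j * v = B j * u) :
    l.foldl (fun g i => A i • pderiv (1 : Fin 2) g - B i • pderiv (0 : Fin 2) g)
      (c • (linForm u v) ^ n) = 0 := by
  induction l generalizing c n with
  | nil => simp at hk
  | cons j l ih =>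
    rcases hk with ⟨j', hj', hkill⟩
    rw [List.foldl_cons, step_smul, step_pow]
    rcases List.mem_cons.mp hj' with rfl | hj'mem
    · rw [show A j' * v - B j' * u = 0 by rw [hkill, sub_self], mul_zero, zero_smul, smul_zero]
      exact fold_zero A B l
    · rw [smul_smul]
      exact ih _ _ ⟨j', hj'mem, hkill⟩

lemma prop_of_rel {A B c c' : K} (hAB : A ≠ 0 ∨ B ≠ 0) (h : A * c' = B * c) :
    ∃ t : K, c = t * A ∧ c' = t * B := by
  rcases hAB with hA | hB
  · refine ⟨c / A, (div_mul_cancel₀ c hA).symm, ?_⟩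
    rw [div_mul_eq_mul_div, eq_div_iff hA]
    linear_combination h
  · refine ⟨c' / B, ?_, (div_mul_cancel₀ c' hB).symm⟩
    rw [div_mul_eq_mul_div, eq_div_iff hB]
    linear_combination -h

lemma kernel1 (A B : K) (hAB : A ≠ 0 ∨ B ≠ 0) :
    ∀ (n : ℕ) (f : MvPolynomial (Fin 2) K), f.IsHomogeneous n →
      A • pderiv (1 : Fin 2) f - B • pderiv (0 : Fin 2) f = 0 →
      ∃ c : K, f = c • (linForm A B) ^ n := by
  intro n
  induction n with
  | zero =>
    intro f hf _
    refine ⟨coeff 0 f, ?_⟩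
    rw [pow_zero, smul_eq_C_mul, mul_one]
    ext m
    rcases eq_or_ne m 0 with rfl | hm
    · simp
    · rw [hf.coeff_eq_zero (by rwa [Ne, Finsupp.degree_eq_zero_iff]), coeff_C,
        if_neg (Ne.symm hm)]
  | succ m ih =>
    intro f hf hstep
    have hx : A • pderiv (1 : Fin 2) (pderiv (0 : Fin 2) f)
        - B • pderiv (0 : Fin 2) (pderiv (0 : Fin 2) f) = 0 := by
      have hcomm : pderiv (0 : Fin 2) (A • pderiv (1 : Fin 2) f - B • pderiv (0 : Fin 2) f)
          = A • pderiv (1 : Fin 2) (pderiv (0 : Fin 2) f)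
            - B • pderiv (0 : Fin 2) (pderiv (0 : Fin 2) f) := by
        rw [map_sub, Derivation.map_smul, Derivation.map_smul, pd_comm 0 1]
      rw [← hcomm, hstep, map_zero]
    have hy : A • pderiv (1 : Fin 2) (pderiv (1 : Fin 2) f)
        - B • pderiv (0 : Fin 2) (pderiv (1 : Fin 2) f) = 0 := by
      have hcomm : pderiv (1 : Fin 2) (A • pderiv (1 : Fin 2) f - B • pderiv (0 : Fin 2) f)
          = A • pderiv (1 : Fin 2) (pderiv (1 : Fin 2) f)
            - B • pderiv (0 : Fin 2) (pderiv (1 : Fin 2) f) := by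
        rw [map_sub, Derivation.map_smul, Derivation.map_smul, pd_comm 1 0]
      rw [← hcomm, hstep, map_zero]
    obtain ⟨c, hc⟩ := ih (pderiv (0 : Fin 2) f) (by simpa using pderiv_homog 0 (m+1) f hf) hx
    obtain ⟨c', hc'⟩ := ih (pderiv (1 : Fin 2) f) (by simpa using pderiv_homog 1 (m+1) f hf) hy
    have hrel : A * c' = B * c := by
      rw [hc, hc'] at hstep
      rw [smul_smul, smul_smul, ← sub_smul] at hstep
      have hlz : (linForm A B : MvPolynomial (Fin 2) K) ^ m ≠ 0 := pow_ne_zero _ (lf_ne_zero hAB)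
      have := (smul_eq_zero.mp hstep).resolve_right hlz
      linear_combination this
    obtain ⟨t, htc, htc'⟩ := prop_of_rel hAB hrel
    have heuler := euler (m+1) f hf
    rw [hc, hc', htc, htc'] at heuler
    have hXl : X 0 * ((t * A) • (linForm A B) ^ m) + X 1 * ((t * B) • (linForm A B) ^ m)
        = t • (linForm A B) ^ (m + 1) := by
      rw [mul_smul_comm, mul_smul_comm, pow_succ, mul_comm ((linForm A B)^m) (linForm A B)]
      rw [smul_eq_C_mul, smul_eq_C_mul, smul_eq_C_mul, linForm]
      simp only [map_mul]
      ring
    rw [hXl] at heuler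
    refine ⟨((m+1 : K))⁻¹ * t, ?_⟩
    have hm1 : ((m : K) + 1) ≠ 0 := Nat.cast_add_one_ne_zero m
    rw [mul_smul, heuler, show ((m + 1 : ℕ) : K) = (m : K) + 1 by push_cast; ring,
      inv_smul_smul₀ hm1]

lemma listsum_homog (n : ℕ) : ∀ l : List (MvPolynomial (Fin 2) K),
    (∀ p ∈ l, p.IsHomogeneous n) → l.sum.IsHomogeneous n := by
  intro l
  induction l with
  | nil => intro _; simpa using isHomogeneous_zero (Fin 2) K n
  | cons p l ih =>
    intro h
    rw [List.sum_cons]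
    exact (h p List.mem_cons_self).add (ih fun q hq => h q (List.mem_cons_of_mem p hq))

lemma step_listsum (A B : K) : ∀ l : List (MvPolynomial (Fin 2) K),
    A • pderiv (1 : Fin 2) l.sum - B • pderiv (0 : Fin 2) l.sum
      = (l.map fun g => A • pderiv (1 : Fin 2) g - B • pderiv (0 : Fin 2) g).sum := by
  intro l
  induction l with
  | nil => simp
  | cons p l ih =>
    rw [List.sum_cons, List.map_cons, List.sum_cons, ← ih, map_add, map_add, smul_add, smul_add]
    abel

lemma homog_zero_exists_C {f : MvPolynomial (Fin 2) K} (hf : f.IsHomogeneous 0) :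
    ∃ c : K, f = c • (1 : MvPolynomial (Fin 2) K) := by
  refine ⟨coeff 0 f, ?_⟩
  rw [smul_eq_C_mul, mul_one]
  ext m
  rcases eq_or_ne m 0 with rfl | hm
  · simp
  · rw [hf.coeff_eq_zero (by rwa [Ne, Finsupp.degree_eq_zero_iff]), coeff_C, if_neg (Ne.symm hm)]

lemma back {ι : Type} (A B : ι → K) (hAB : ∀ i, A i ≠ 0 ∨ B i ≠ 0) :
    ∀ (l : List ι), l.Pairwise (fun i k => A i * B k ≠ A k * B i) →
    ∀ (n : ℕ) (f : MvPolynomial (Fin 2) K), f.IsHomogeneous n →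
    l.foldl (fun g i => A i • pderiv (1 : Fin 2) g - B i • pderiv (0 : Fin 2) g) f = 0 →
    ∃ co : ι → K, f = (l.map fun j => co j • (linForm (A j) (B j)) ^ n).sum := by
  classical
  intro l
  induction l with
  | nil =>
    intro _ n f _ hfold
    exact ⟨fun _ => 0, by simpa using hfold⟩
  | cons j l' ih =>
    intro hpw n f hf hfold
    have hpw' : l'.Pairwise (fun i k => A i * B k ≠ A k * B i) := (List.pairwise_cons.mp hpw).2
    have hjl : ∀ k ∈ l', A j * B k ≠ A k * B j := (List.pairwise_cons.mp hpw).1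
    have hjnotmem : j ∉ l' := fun hmem => hjl j hmem rfl
    match n with
    | 0 =>
      obtain ⟨c, hc⟩ := homog_zero_exists_C hf
      refine ⟨fun k => if k = j then c else 0, ?_⟩
      beta_reduce
      rw [List.map_cons, List.sum_cons, if_pos rfl, pow_zero]
      have hz : (l'.map fun k => (if k = j then c else 0) • (linForm (A k) (B k)) ^ (0:ℕ)).sum = 0 := by
        apply List.sum_eq_zero
        intro x hx
        obtain ⟨k, hk, rfl⟩ := List.mem_map.mp hx
        rw [if_neg (fun h : k = j => hjnotmem (h ▸ hk)), zero_smul]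
      rw [hz, add_zero, hc]
    | Nat.succ m =>
      rw [List.foldl_cons] at hfold
      have hstepf : (A j • pderiv (1 : Fin 2) f - B j • pderiv (0 : Fin 2) f).IsHomogeneous m := by
        have h1 : (A j • pderiv (1 : Fin 2) f).IsHomogeneous m := by
          rw [smul_eq_C_mul]
          simpa using (isHomogeneous_C (Fin 2) (A j)).mul
            (by simpa using pderiv_homog 1 (m+1) f hf)
        have h2 : (B j • pderiv (0 : Fin 2) f).IsHomogeneous m := by
          rw [smul_eq_C_mul]
          simpa using (isHomogeneous_C (Fin 2) (B j)).mul
            (by simpa using pderiv_homog 0 (m+1) f hf)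
        exact h1.sub h2
      obtain ⟨co', hco'⟩ := ih hpw' m _ hstepf hfold
      set den : ι → K := fun k => ((m : K) + 1) * (A j * B k - B j * A k) with hden
      have hdenne : ∀ k ∈ l', den k ≠ 0 := by
        intro k hk
        refine mul_ne_zero (Nat.cast_add_one_ne_zero m) (sub_ne_zero.mpr ?_)
        rw [mul_comm (B j) (A k)]
        exact hjl k hk
      set f0 : MvPolynomial (Fin 2) K :=
        (l'.map fun k => (co' k / den k) • (linForm (A k) (B k)) ^ (m+1)).sum with hf0
      have hstepf0 : A j • pderiv (1 : Fin 2) f0 - B j • pderiv (0 : Fin 2) f0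
          = (l'.map fun k => co' k • (linForm (A k) (B k)) ^ m).sum := by
        rw [hf0, step_listsum, List.map_map]
        congr 1
        apply List.map_congr_left
        intro k hk
        simp only [Function.comp]
        rw [step_smul, step_pow, Nat.add_sub_cancel, smul_smul]
        congr 1
        have hfac : ((m + 1 : ℕ) : K) * (A j * B k - B j * A k) = den k := by
          rw [hden]; push_cast; ring
        rw [hfac, div_mul_cancel₀ _ (hdenne k hk)]
      have hker : A j • pderiv (1 : Fin 2) (f - f0) - B j • pderiv (0 : Fin 2) (f - f0) = 0 := by
        have hexp : A j • pderiv (1 : Fin 2) (f - f0) - B j • pderiv (0 : Fin 2) (f - f0)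
            = (A j • pderiv (1 : Fin 2) f - B j • pderiv (0 : Fin 2) f)
              - (A j • pderiv (1 : Fin 2) f0 - B j • pderiv (0 : Fin 2) f0) := by
          rw [map_sub, map_sub, smul_sub, smul_sub]
          abel
        rw [hexp, hstepf0, ← hco', sub_self]
      have hf0homog : f0.IsHomogeneous (m + 1) := by
        apply listsum_homog
        intro p hp
        obtain ⟨k, _, rfl⟩ := List.mem_map.mp hp
        exact smul_pow_homog _ _ _ _
      obtain ⟨c, hcc⟩ := kernel1 (A j) (B j) (hAB j) (m+1) (f - f0) (hf.sub hf0homog) hker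
      refine ⟨fun k => if k = j then c else co' k / den k, ?_⟩
      beta_reduce
      rw [List.map_cons, List.sum_cons, if_pos rfl]
      have hmapeq : (l'.map fun k => (if k = j then c else co' k / den k) • (linForm (A k) (B k)) ^ (m+1))
          = (l'.map fun k => (co' k / den k) • (linForm (A k) (B k)) ^ (m+1)) := by
        apply List.map_congr_left
        intro k hk
        rw [if_neg (fun h : k = j => hjnotmem (h ▸ hk))]
      rw [hmapeq, ← hf0]
      exact eq_add_of_sub_eq hcc

def nrm {K : Type} [Field K] [DecidableEq K] (p : K × K) : K × K :=
  if p.1 = 0 then ((0 : K), (1 : K)) else ((1 : K), p.2 / p.1)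

lemma nrm_cases [DecidableEq K] {q : K × K} (hq : q ∈ Set.range (nrm (K := K))) :
    q = (0, 1) ∨ ∃ t : K, q = (1, t) := by
  obtain ⟨p, rfl⟩ := hq
  by_cases h : p.1 = 0
  · left; simp [nrm, h]
  · right; exact ⟨p.2 / p.1, by simp [nrm, h]⟩

lemma nrm_kill [DecidableEq K] (u v : K) : (nrm (u, v)).1 * v = (nrm (u, v)).2 * u := by
  by_cases h : u = 0
  · simp [nrm, h]
  · simp only [nrm, h, if_false]
    rw [one_mul, div_mul_cancel₀ _ h]

lemma nrm_nonprop [DecidableEq K] {p q : K × K} (hp : p ∈ Set.range (nrm (K := K)))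
    (hq : q ∈ Set.range (nrm (K := K))) (hne : p ≠ q) : p.1 * q.2 ≠ q.1 * p.2 := by
  rcases nrm_cases hp with rfl | ⟨t, rfl⟩ <;> rcases nrm_cases hq with rfl | ⟨t', rfl⟩
  · exact absurd rfl hne
  · simp
  · simp
  · simp only [one_mul, ne_eq]
    intro h
    exact hne (by rw [h])

lemma range_nrm_infinite [DecidableEq K] : (Set.range (nrm (K := K))).Infinite := by
  have hinj : Function.Injective (fun t : K => ((1 : K), t)) := by
    intro a b hab
    simpa using congrArg Prod.snd hab
  have hmem : ∀ t : K, ((1 : K), t) ∈ Set.range (nrm (K := K)) := by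
    intro t
    exact ⟨(1, t), by simp [nrm]⟩
  exact Set.infinite_of_injective_forall_mem hinj hmem

lemma select (s r : ℕ) (hsr : s ≤ r) (u v : Fin s → K) :
    ∃ A B : Fin r → K, (∀ i, A i ≠ 0 ∨ B i ≠ 0) ∧
      (∀ i j, i ≠ j → A i * B j ≠ A j * B i) ∧
      ∀ i : Fin s, ∃ j : Fin r, A j * v i = B j * u i := by
  classical
  haveI : Infinite ↥(Set.range (nrm (K := K))) := (range_nrm_infinite (K := K)).to_subtype
  set E0 : Finset ↥(Set.range (nrm (K := K))) :=
    Finset.image (fun i => ⟨nrm (u i, v i), Set.mem_range_self _⟩) Finset.univ with hE0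
  have hcard : E0.card ≤ r := le_trans (Finset.card_image_le.trans (by simp)) hsr
  obtain ⟨E, hE0E, hEcard⟩ := Infinite.exists_superset_card_eq E0 r hcard
  have hcard2 : Fintype.card ↥E = r := by rw [Fintype.card_coe, hEcard]
  set eqv : ↥E ≃ Fin r := (Fintype.equivFin ↥E).trans (finCongr hcard2) with heqv
  refine ⟨fun j => ((eqv.symm j : ↥E) : ↥(Set.range (nrm (K := K)))).val.1,
    fun j => ((eqv.symm j : ↥E) : ↥(Set.range (nrm (K := K)))).val.2, ?_, ?_, ?_⟩
  · intro j
    beta_reduce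
    rcases nrm_cases ((eqv.symm j : ↥E) : ↥(Set.range (nrm (K := K)))).property with h | ⟨t, h⟩
    · right; rw [h]; exact one_ne_zero
    · left; rw [h]; exact one_ne_zero
  · intro i j hij
    beta_reduce
    have hne : ((eqv.symm i : ↥E) : ↥(Set.range (nrm (K := K)))).val
        ≠ ((eqv.symm j : ↥E) : ↥(Set.range (nrm (K := K)))).val := by
      intro h
      apply hij
      have h1 : (eqv.symm i : ↥E) = (eqv.symm j : ↥E) :=
        Subtype.coe_injective (Subtype.coe_injective h)
      have := congrArg eqv h1
      simpa using this
    exact nrm_nonprop ((eqv.symm i : ↥E) : ↥(Set.range (nrm (K := K)))).property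
      ((eqv.symm j : ↥E) : ↥(Set.range (nrm (K := K)))).property hne
  · intro i
    have hmem : (⟨nrm (u i, v i), Set.mem_range_self _⟩ : ↥(Set.range (nrm (K := K)))) ∈ E :=
      hE0E (by rw [hE0]; exact Finset.mem_image.mpr ⟨i, Finset.mem_univ i, rfl⟩)
    refine ⟨eqv ⟨_, hmem⟩, ?_⟩
    beta_reduce
    rw [heqv]
    simp only [Equiv.symm_apply_apply]
    exact nrm_kill (u i) (v i)


end folds

end AuxApolar

/-- a binary form `f` of degree `d` over a field `K ⊆ ℂ` (char. zero) has
`K`-rank at most `r` iff the degree-`r` part of its apolar ideal contains an operator that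
splits into `r` pairwise distinct linear factors over `K` (i.e. a form with `r` distinct
roots in `ℙ^1(K)`). -/
theorem rank_le_iff_apolar_distinct_roots (K : Type) [Field K] [CharZero K] (d r : ℕ)
    (f : MvPolynomial (Fin 2) K) (hf : f.IsHomogeneous d) :
    (∃ s ≤ r, ∃ (α u v : Fin s → K), f = ∑ i, α i • (linForm (u i) (v i)) ^ d) ↔
      ∃ A B : Fin r → K, (∀ i, A i ≠ 0 ∨ B i ≠ 0) ∧
        (∀ i j, i ≠ j → A i * B j ≠ A j * B i) ∧
        (List.finRange r).foldl
          (fun g i => A i • pderiv (1 : Fin 2) g - B i • pderiv (0 : Fin 2) g) f = 0 := by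
  constructor
  · rintro ⟨s, hs, α, u, v, rfl⟩
    obtain ⟨A, B, h1, h2, h3⟩ := select s r hs u v
    refine ⟨A, B, h1, h2, ?_⟩
    rw [fold_sum]
    apply Finset.sum_eq_zero
    intro i _
    obtain ⟨j, hj⟩ := h3 i
    exact fold_kill A B (u i) (v i) (α i) d _ ⟨j, List.mem_finRange j, hj⟩
  · rintro ⟨A, B, h1, h2, hfold⟩
    have hpw : (List.finRange r).Pairwise (fun i k => A i * B k ≠ A k * B i) :=
      List.Pairwise.imp (fun hab => h2 _ _ hab) (List.nodup_finRange r)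
    obtain ⟨co, hco⟩ := back A B h1 (List.finRange r) hpw d f hf hfold
    refine ⟨r, le_refl r, co, A, B, ?_⟩
    rw [Fin.sum_univ_def]
    exact hco
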